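/- For every μ ∈ ℝ^m and every x ∈ X, the sum over labels of the positive part of the affine transform of the feature mapping is at most one: ∑_{y ∈ Y} max(Φ(x,y)ᵀμ − φ(μ), 0) ≤ 1. Consequently, for any μ there exists a classification rule h satisfying h(y|x) ≥ Φ(x,y)ᵀμ − φ(μ) for all x ∈ X and y ∈ Y. -/

import Mathlib

open MeasureTheory

noncomputable section

/-- A (randomized) classification rule. -/
def IsRule {d K : ℕ} (Xs : Set (Fin d → ℝ)) (h : ↥Xs → Fin K → ℝ) : Prop :=
  (∀ x y, 0 ≤ h x y) ∧ (∀ x, ∑ y, h x y = 1) ∧ ∀ y, Measurable fun x => h x y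

/-- `φ(μ) = sup_{x ∈ X, ∅ ≠ C ⊆ Y} ((∑_{y∈C} Φ(x,y)ᵀμ) - 1)/|C|`. -/
def phi {d K m : ℕ} {Xs : Set (Fin d → ℝ)} (Φ : ↥Xs × Fin K → Fin m → ℝ)
    (μ : Fin m → ℝ) : ℝ :=
  ⨆ (x : ↥Xs) (C : {C : Finset (Fin K) // C.Nonempty}),
    ((∑ y ∈ C.1, ∑ i, Φ (x, y) i * μ i) - 1) / (C.1.card : ℝ)

lemma sum_max_le {d K m : ℕ} (hK : 0 < K) {Xs : Set (Fin d → ℝ)}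
    (Φ : ↥Xs × Fin K → Fin m → ℝ) (B : ℝ) (hΦbdd : ∀ z i, |Φ z i| ≤ B)
    (μ : Fin m → ℝ) (x : ↥Xs) :
    ∑ y : Fin K, max ((∑ i, Φ (x, y) i * μ i) - phi Φ μ) 0 ≤ 1 := by
  set Bμ : ℝ := ∑ i, B * |μ i| with hBμ
  have hbdd : ∀ (z : ↥Xs × Fin K), ∑ i, Φ z i * μ i ≤ Bμ := by
    intro z
    apply Finset.sum_le_sum
    intro i _
    calc Φ z i * μ i ≤ |Φ z i * μ i| := le_abs_self _
      _ = |Φ z i| * |μ i| := abs_mul _ _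
      _ ≤ B * |μ i| := mul_le_mul_of_nonneg_right (hΦbdd z i) (abs_nonneg _)
  have hb : ∀ (x' : ↥Xs) (C : {C : Finset (Fin K) // C.Nonempty}),
      ((∑ y ∈ C.1, ∑ i, Φ (x', y) i * μ i) - 1) / (C.1.card : ℝ) ≤ Bμ := by
    intro x' C
    have hc : (0 : ℝ) < (C.1.card : ℝ) := by
      exact_mod_cast C.2.card_pos
    rw [div_le_iff₀ hc]
    have hs : ∑ y ∈ C.1, ∑ i, Φ (x', y) i * μ i ≤ (C.1.card : ℝ) * Bμ := by
      calc ∑ y ∈ C.1, ∑ i, Φ (x', y) i * μ i ≤ ∑ _y ∈ C.1, Bμ :=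
            Finset.sum_le_sum fun y _ => hbdd (x', y)
        _ = (C.1.card : ℝ) * Bμ := by rw [Finset.sum_const, nsmul_eq_mul]
    nlinarith
  haveI : Nonempty {C : Finset (Fin K) // C.Nonempty} :=
    ⟨⟨{⟨0, hK⟩}, Finset.singleton_nonempty _⟩⟩
  have h1 : ∀ (x' : ↥Xs) (C : {C : Finset (Fin K) // C.Nonempty}),
      ((∑ y ∈ C.1, ∑ i, Φ (x', y) i * μ i) - 1) / (C.1.card : ℝ) ≤ phi Φ μ := by
    intro x' C
    have hinner : (⨆ C : {C : Finset (Fin K) // C.Nonempty},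
        ((∑ y ∈ C.1, ∑ i, Φ (x', y) i * μ i) - 1) / (C.1.card : ℝ)) ≤ phi Φ μ := by
      apply le_ciSup_of_le ?_ x' le_rfl
      exact ⟨Bμ, by rintro _ ⟨x'', rfl⟩; exact ciSup_le (hb x'')⟩
    refine le_trans ?_ hinner
    exact le_ciSup (f := fun C : {C : Finset (Fin K) // C.Nonempty} =>
      ((∑ y ∈ C.1, ∑ i, Φ (x', y) i * μ i) - 1) / (C.1.card : ℝ))
      (Set.finite_range _).bddAbove C
  -- key inequality: for nonempty C, ∑_{y∈C} a y - 1 ≤ card * phi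
  set a : Fin K → ℝ := fun y => ∑ i, Φ (x, y) i * μ i with ha
  have key : ∀ C : Finset (Fin K), C.Nonempty →
      (∑ y ∈ C, a y) - 1 ≤ (C.card : ℝ) * phi Φ μ := by
    intro C hC
    have hc : (0 : ℝ) < (C.card : ℝ) := by exact_mod_cast hC.card_pos
    have := h1 x ⟨C, hC⟩
    rw [div_le_iff₀ hc] at this
    linarith
  set F : Finset (Fin K) := Finset.univ.filter (fun y => 0 < a y - phi Φ μ) with hF
  have hsum : ∑ y : Fin K, max (a y - phi Φ μ) 0 = ∑ y ∈ F, (a y - phi Φ μ) := by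
    rw [hF, Finset.sum_filter]
    apply Finset.sum_congr rfl
    intro y _
    rcases lt_or_ge 0 (a y - phi Φ μ) with h | h
    · simp [h, max_eq_left h.le]
    · simp [h, max_eq_right h, not_lt.mpr h]
  rw [hsum]
  rcases F.eq_empty_or_nonempty with hFe | hFne
  · simp [hFe]
  · have := key F hFne
    have h2 : ∑ y ∈ F, (a y - phi Φ μ) = (∑ y ∈ F, a y) - (F.card : ℝ) * phi Φ μ := by
      rw [Finset.sum_sub_distrib, Finset.sum_const, nsmul_eq_mul]
    linarith

/-- The positive parts of `Φ(x,y)ᵀμ − φ(μ)` sum to at most one over the labels; hence a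
classification rule dominating `Φᵀμ − φ(μ)` always exists. -/
theorem stmt_3 {d K m : ℕ} (hK : 0 < K)
    (Xs : Set (Fin d → ℝ)) (hXs : MeasurableSet Xs)
    (Φ : ↥Xs × Fin K → Fin m → ℝ) (hΦmeas : ∀ i, Measurable fun z => Φ z i)
    (B : ℝ) (hΦbdd : ∀ z i, |Φ z i| ≤ B) :
    (∀ (μ : Fin m → ℝ) (x : ↥Xs),
      ∑ y : Fin K, max ((∑ i, Φ (x, y) i * μ i) - phi Φ μ) 0 ≤ 1) ∧
    (∀ μ : Fin m → ℝ, ∃ h : ↥Xs → Fin K → ℝ, IsRule Xs h ∧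
      ∀ (x : ↥Xs) (y : Fin K), (∑ i, Φ (x, y) i * μ i) - phi Φ μ ≤ h x y) := by
  have part1 : ∀ (μ : Fin m → ℝ) (x : ↥Xs),
      ∑ y : Fin K, max ((∑ i, Φ (x, y) i * μ i) - phi Φ μ) 0 ≤ 1 :=
    fun μ x => sum_max_le hK Φ B hΦbdd μ x
  refine ⟨part1, fun μ => ?_⟩
  set g : ↥Xs → Fin K → ℝ :=
    fun x y => max ((∑ i, Φ (x, y) i * μ i) - phi Φ μ) 0 with hg
  have hSle : ∀ x, ∑ y, g x y ≤ 1 := fun x => part1 μ x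
  have hgnn : ∀ x y, 0 ≤ g x y := fun x y => le_max_right _ _
  refine ⟨fun x y => g x y + (1 - ∑ y', g x y') / K, ⟨?_, ?_, ?_⟩, ?_⟩
  · intro x y
    have : 0 ≤ (1 - ∑ y', g x y') / K :=
      div_nonneg (by linarith [hSle x]) (Nat.cast_nonneg K)
    linarith [hgnn x y]
  · intro x
    rw [Finset.sum_add_distrib, Finset.sum_const, Finset.card_univ, Fintype.card_fin,
      nsmul_eq_mul]
    have hKne : (K : ℝ) ≠ 0 := by positivity
    field_simp
    ring
  · intro y
    have hm : ∀ y', Measurable fun x : ↥Xs => ∑ i, Φ (x, y') i * μ i := by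
      intro y'
      apply Finset.measurable_sum
      intro i _
      exact ((hΦmeas i).comp (measurable_id.prodMk measurable_const)).mul_const _
    have hmg : ∀ y', Measurable fun x : ↥Xs => g x y' := by
      intro y'
      exact ((hm y').sub measurable_const).max measurable_const
    exact (hmg y).add (((measurable_const.sub
      (Finset.measurable_sum Finset.univ fun y' _ => hmg y')).div_const _))
  · intro x y
    have h1 : (∑ i, Φ (x, y) i * μ i) - phi Φ μ ≤ g x y := le_max_left _ _
    have : 0 ≤ (1 - ∑ y', g x y') / K :=
      div_nonneg (by linarith [hSle x]) (Nat.cast_nonneg K)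
    linarith

end
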